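/- The polynomials T_n(x) defined by T_0(x) = 1 and T_n(x) = x·T_{n-1}(x) + 2x·T'_{n-1}(x) have only real roots; moreover the roots of T_{n-1} interlace the roots of T_n for n ≥ 2. -/

import Mathlib

open Polynomial

/-- The block-generating polynomials of type B set partitions without zero block:
`T_0 = 1`, `T_n(x) = x T_{n-1}(x) + 2x T'_{n-1}(x)`. -/
noncomputable def T : ℕ → Polynomial ℝ
  | 0 => 1
  | n + 1 => X * T n + 2 * X * derivative (T n)

/-- The sorted (with multiplicity) list of real roots of a real polynomial. -/
noncomputable def sortedRoots (f : Polynomial ℝ) : List ℝ := f.roots.sort (· ≤ ·)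

/-- `f` interlaces `g`: `deg f + 1 = deg g` and, writing the sorted real roots of `f` as
`f_1 ≤ ... ≤ f_{d-1}` and those of `g` as `g_1 ≤ ... ≤ g_d`, we have
`g_1 ≤ f_1 ≤ g_2 ≤ ... ≤ f_{d-1} ≤ g_d`. -/
def Interlaces (f g : Polynomial ℝ) : Prop :=
  f.natDegree + 1 = g.natDegree ∧
  ∀ i, i + 1 < (sortedRoots g).length →
    (sortedRoots g).getD i 0 ≤ (sortedRoots f).getD i 0 ∧
    (sortedRoots f).getD i 0 ≤ (sortedRoots g).getD (i + 1) 0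

namespace TAux

open Finset

noncomputable def P {n : ℕ} (r : Fin n → ℝ) : Polynomial ℝ := ∏ i, (X - C (r i))

lemma monic_P {n : ℕ} (r : Fin n → ℝ) : (P r).Monic :=
  monic_prod_of_monic _ _ fun i _ => monic_X_sub_C (r i)

lemma natDegree_P {n : ℕ} (r : Fin n → ℝ) : (P r).natDegree = n := by
  rw [P, natDegree_prod_of_monic _ _ fun i _ => monic_X_sub_C (r i)]; simp

lemma eval_P {n : ℕ} (r : Fin n → ℝ) (x : ℝ) : (P r).eval x = ∏ i, (x - r i) := by
  simp [P, eval_prod]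

lemma P_eq_multiset {n : ℕ} (r : Fin n → ℝ) :
    P r = (Multiset.map (fun a => X - C a) (Multiset.map r univ.val)).prod := by
  rw [P, Finset.prod_eq_multiset_prod, Multiset.map_map]
  rfl

lemma roots_P {n : ℕ} (r : Fin n → ℝ) : (P r).roots = Multiset.map r univ.val := by
  rw [P_eq_multiset, roots_multiset_prod_X_sub_C]

lemma eval_derivative_P {n : ℕ} (r : Fin n → ℝ) (hr : Function.Injective r) (i : Fin n) :
    (derivative (P r)).eval (r i) = ∏ j ∈ univ.erase i, (r i - r j) := by
  rw [P_eq_multiset]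
  rw [eval_multiset_prod_X_sub_C_derivative (Multiset.mem_map_of_mem r (mem_univ i))]
  rw [← Multiset.map_erase r hr, ← Finset.erase_val, Multiset.map_map,
    Finset.prod_eq_multiset_prod]
  rfl

lemma sign_prod {n : ℕ} {r : Fin n → ℝ} (hr : StrictMono r) (i : Fin n) :
    0 < (-1 : ℝ) ^ (n - 1 - i.val) * ∏ j ∈ univ.erase i, (r i - r j) := by
  have hsplit : (univ.erase i) = Iio i ∪ Ioi i := by
    ext j
    simp only [mem_erase, mem_univ, and_true, mem_union, mem_Iio, mem_Ioi]
    exact ⟨fun h => h.lt_or_gt, fun h => h.elim (fun h => h.ne) (fun h => h.ne')⟩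
  have hdisj : Disjoint (Iio i) (Ioi i) := by
    simp [Finset.disjoint_left]
    exact fun a h1 => le_of_lt h1
  have hA : 0 < ∏ j ∈ Iio i, (r i - r j) :=
    Finset.prod_pos fun j hj => sub_pos.2 (hr (mem_Iio.1 hj))
  have hB : 0 < ∏ j ∈ Ioi i, (r j - r i) :=
    Finset.prod_pos fun j hj => sub_pos.2 (hr (mem_Ioi.1 hj))
  have hBneg : ∏ j ∈ Ioi i, (r i - r j)
      = (-1 : ℝ) ^ (n - 1 - i.val) * ∏ j ∈ Ioi i, (r j - r i) := by
    rw [← Fin.card_Ioi i, ← Finset.prod_const (-1 : ℝ), ← Finset.prod_mul_distrib]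
    exact Finset.prod_congr rfl fun j _ => by ring
  rw [hsplit, Finset.prod_union hdisj, hBneg]
  have key : (-1 : ℝ) ^ (n - 1 - i.val) * (-1 : ℝ) ^ (n - 1 - i.val) = 1 := by
    rw [← pow_add]; exact Even.neg_one_pow ⟨_, rfl⟩
  calc (0:ℝ) < (∏ j ∈ Iio i, (r i - r j)) * ∏ j ∈ Ioi i, (r j - r i) := mul_pos hA hB
  _ = (-1 : ℝ) ^ (n - 1 - i.val) *
      ((∏ j ∈ Iio i, (r i - r j)) * ((-1 : ℝ) ^ (n - 1 - i.val) * ∏ j ∈ Ioi i, (r j - r i))) := by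
    rw [show ∀ a b c : ℝ, a * (b * (a * c)) = (a*a) * (b*c) from fun a b c => by ring, key,
      one_mul]

lemma exists_neg_sign (W : Polynomial ℝ) (hW : W.Monic) {d : ℕ} (hd : W.natDegree = d)
    (hd0 : 0 < d) (b : ℝ) : ∃ x, x < b ∧ 0 < (-1 : ℝ) ^ d * W.eval x := by
  set Q : Polynomial ℝ := C ((-1 : ℝ) ^ d) * W.comp (-X) with hQ
  have hdegX : (-X : Polynomial ℝ).natDegree = 1 := by simp
  have hcomp : (W.comp (-X)).natDegree = d := by
    rw [natDegree_comp, hdegX, hd, mul_one]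
  have hlc : (W.comp (-X)).leadingCoeff = (-1 : ℝ) ^ d := by
    rw [leadingCoeff_comp (by rw [hdegX]; norm_num), hW.leadingCoeff, one_mul, hd]
    simp [leadingCoeff]
  have hQlc : Q.leadingCoeff = 1 := by
    rw [hQ, leadingCoeff_mul, leadingCoeff_C, hlc, ← pow_add]
    exact Even.neg_one_pow ⟨d, rfl⟩
  have hQdeg : 0 < Q.degree := by
    have hQne : Q ≠ 0 := by
      intro h; rw [h] at hQlc; simp at hQlc
    have : Q.natDegree = d := by
      have h1 : (C ((-1 : ℝ) ^ d)) ≠ 0 := by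
        rw [Ne, C_eq_zero]; exact pow_ne_zero _ (by norm_num)
      have h2 : W.comp (-X) ≠ 0 := by
        rw [← leadingCoeff_ne_zero, hlc]; exact pow_ne_zero _ (by norm_num)
      rw [hQ, natDegree_mul h1 h2, natDegree_C, hcomp, zero_add]
    rw [degree_eq_natDegree hQne, this]
    exact_mod_cast hd0
  have htend : Filter.Tendsto (fun x => Q.eval x) Filter.atTop Filter.atTop :=
    Q.tendsto_atTop_of_leadingCoeff_nonneg hQdeg (by rw [hQlc]; norm_num)
  have : ∀ᶠ x in Filter.atTop, 0 < Q.eval x ∧ -b < x := by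
    filter_upwards [htend.eventually_gt_atTop 0, Filter.eventually_gt_atTop (-b)] with x h1 h2
    exact ⟨h1, h2⟩
  obtain ⟨x, hx1, hx2⟩ := this.exists
  refine ⟨-x, by linarith, ?_⟩
  have : Q.eval x = (-1 : ℝ) ^ d * W.eval (-x) := by
    simp [hQ, eval_comp]
  linarith [this ▸ hx1]

lemma exists_root_of_sign (f : Polynomial ℝ) (m : ℕ) {a b : ℝ} (hab : a < b)
    (ha : 0 < (-1 : ℝ) ^ (m + 1) * f.eval a) (hb : 0 < (-1 : ℝ) ^ m * f.eval b) :
    ∃ c, a < c ∧ c < b ∧ f.eval c = 0 := by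
  have hcont : ContinuousOn (fun x => f.eval x) (Set.Icc a b) :=
    f.continuous_aeval.continuousOn
  rcases Nat.even_or_odd m with hm | hm
  · have e1 : ((-1 : ℝ)) ^ m = 1 := hm.neg_one_pow
    have e2 : ((-1 : ℝ)) ^ (m + 1) = -1 := by rw [pow_succ, e1, one_mul]
    rw [e2] at ha; rw [e1] at hb
    have h0 : (0:ℝ) ∈ Set.Ioo (f.eval a) (f.eval b) := ⟨by linarith, by linarith⟩
    obtain ⟨c, hc, hc0⟩ := intermediate_value_Ioo hab.le hcont h0
    exact ⟨c, hc.1, hc.2, hc0⟩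
  · have e1 : ((-1 : ℝ)) ^ m = -1 := hm.neg_one_pow
    have e2 : ((-1 : ℝ)) ^ (m + 1) = 1 := by rw [pow_succ, e1]; norm_num
    rw [e2] at ha; rw [e1] at hb
    have h0 : (0:ℝ) ∈ Set.Ioo (f.eval b) (f.eval a) := ⟨by linarith, by linarith⟩
    obtain ⟨c, hc, hc0⟩ := intermediate_value_Ioo' hab.le hcont h0
    exact ⟨c, hc.1, hc.2, hc0⟩

lemma eq_P_of_roots {n : ℕ} (q : Polynomial ℝ) (hq : q.Monic) (hdeg : q.natDegree = n)
    (s : Fin n → ℝ) (hs : Function.Injective s) (hroot : ∀ i, q.eval (s i) = 0) :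
    q = P s := by
  by_contra hne
  set D := q - P s with hD
  have hDne : D ≠ 0 := sub_ne_zero.2 hne
  have hDdeg : D.natDegree < n := by
    have h1 : D.degree < q.degree := by
      apply degree_sub_lt
      · rw [degree_eq_natDegree hq.ne_zero, degree_eq_natDegree (monic_P s).ne_zero, hdeg,
          natDegree_P]
      · exact hq.ne_zero
      · rw [hq.leadingCoeff, (monic_P s).leadingCoeff]
    rw [degree_eq_natDegree hq.ne_zero, hdeg] at h1
    exact (natDegree_lt_iff_degree_lt hDne).2 h1
  have hroots : Multiset.map s univ.val ≤ D.roots := by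
    rw [Multiset.le_iff_subset (Multiset.Nodup.map hs univ.nodup)]
    intro a ha
    obtain ⟨i, _, rfl⟩ := Multiset.mem_map.1 ha
    rw [mem_roots hDne]
    simp only [hD, IsRoot, eval_sub, hroot i, eval_P, zero_sub, neg_eq_zero]
    exact Finset.prod_eq_zero (mem_univ i) (sub_self _)
  have hcard : n ≤ Multiset.card D.roots := by
    have := Multiset.card_le_card hroots
    simpa using this
  have := D.card_roots'
  omega

/-- The inductive data: the roots of `T (n+1)`. -/
structure RootData (n : ℕ) where
  r : Fin n → ℝ
  mono : StrictMono r
  neg : ∀ i, r i < 0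
  eq : T (n + 1) = X * P r

lemma step {n : ℕ} (d : RootData n) :
    ∃ e : RootData (n + 1), ∀ i : Fin n, e.r i.castSucc < d.r i ∧ d.r i < e.r i.succ := by
  obtain ⟨r, rmono, rneg, req⟩ := d
  set U := P r with hU
  set V := (X + 2) * U + 2 * X * derivative U with hV
  have hUm : U.Monic := monic_P r
  have hUdeg : U.natDegree = n := natDegree_P r
  have hT2 : T (n + 2) = X * V := by
    show X * T (n + 1) + 2 * X * derivative (T (n + 1)) = X * V
    rw [req, hV, derivative_mul, derivative_X]
    ring
  have h2C : (2 : Polynomial ℝ) = C 2 := (map_ofNat C 2).symm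
  have h1m : ((X + 2 : Polynomial ℝ) * U).Monic := by
    rw [h2C]; exact (monic_X_add_C 2).mul hUm
  have h1deg : ((X + 2 : Polynomial ℝ) * U).natDegree = n + 1 := by
    rw [h2C, (monic_X_add_C (2:ℝ)).natDegree_mul hUm, natDegree_X_add_C, hUdeg, add_comm]
  have h1degree : ((X + 2 : Polynomial ℝ) * U).degree = ((n + 1 : ℕ) : WithBot ℕ) := by
    rw [degree_eq_natDegree h1m.ne_zero, h1deg]
  have hdq : (2 * X * derivative U : Polynomial ℝ).degree < ((n + 1 : ℕ) : WithBot ℕ) := by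
    rcases eq_or_ne (derivative U) 0 with h | h
    · rw [h, mul_zero, degree_zero]; exact WithBot.bot_lt_coe _
    · rw [degree_mul, degree_mul, h2C, degree_C (two_ne_zero), degree_X, zero_add]
      have h2 : (derivative U).degree < (n : ℕ) := by
        have := degree_derivative_lt hUm.ne_zero
        rwa [degree_eq_natDegree hUm.ne_zero, hUdeg] at this
      rw [degree_eq_natDegree h]
      rw [degree_eq_natDegree h] at h2
      have hmn : (derivative U).natDegree < n := by exact_mod_cast h2
      have : (1 : ℕ) + (derivative U).natDegree < n + 1 := by omega
      exact_mod_cast this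
  have hVm : V.Monic := by
    rw [hV]; exact h1m.add_of_left (h1degree ▸ hdq)
  have hVdeg : V.natDegree = n + 1 := by
    have : V.degree = ((n + 1 : ℕ) : WithBot ℕ) := by
      rw [hV, degree_add_eq_left_of_degree_lt (h1degree ▸ hdq), h1degree]
    exact natDegree_eq_of_degree_eq_some this
  have hVeval : ∀ x : ℝ, V.eval x = (x + 2) * U.eval x + 2 * x * (derivative U).eval x := by
    intro x; simp [hV]
  have hUroot : ∀ i, U.eval (r i) = 0 := fun i => by
    rw [hU, eval_P]; exact Finset.prod_eq_zero (mem_univ i) (sub_self _)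
  have hVr : ∀ i, V.eval (r i) = 2 * r i * ∏ j ∈ univ.erase i, (r i - r j) := by
    intro i
    rw [hVeval, hUroot, mul_zero, zero_add, hU, eval_derivative_P r rmono.injective]
  have hsign_root : ∀ i : Fin n, 0 < (-1 : ℝ) ^ (n - i.val) * V.eval (r i) := by
    intro i
    have h1 := sign_prod rmono i
    have h2 : n - i.val = (n - 1 - i.val) + 1 := by have := i.isLt; omega
    rw [hVr i, h2, pow_succ]
    nlinarith [mul_pos h1 (neg_pos.mpr (rneg i))]
  have hV0 : 0 < V.eval 0 := by
    have hp : 0 < ∏ i, ((0 : ℝ) - r i) :=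
      Finset.prod_pos fun i _ => sub_pos.2 (rneg i)
    rw [hVeval, hU, eval_P]
    simp only [mul_zero, zero_add, add_zero, zero_mul, zero_add]
    linarith
  set g : Fin (n + 1) → ℝ := Fin.snoc r 0 with hg
  have hgsign : ∀ j : Fin (n + 1), 0 < (-1 : ℝ) ^ (n - j.val) * V.eval (g j) := by
    intro j
    induction j using Fin.lastCases with
    | last => simpa [hg, Fin.snoc_last, Nat.sub_self] using hV0
    | cast i => rw [hg]; simpa [Fin.snoc_castSucc] using hsign_root i
  have hgle : ∀ j, g j ≤ 0 := by
    intro j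
    induction j using Fin.lastCases with
    | last => simp [hg, Fin.snoc_last]
    | cast i => rw [hg]; simpa [Fin.snoc_castSucc] using (rneg i).le
  obtain ⟨x0, hx0b, hx0sign⟩ :=
    exists_neg_sign V hVm hVdeg (Nat.succ_pos n) (univ.inf' univ_nonempty g)
  have hx0g : ∀ j, x0 < g j := fun j =>
    lt_of_lt_of_le hx0b (inf'_le _ (mem_univ j))
  set c : Fin (n + 2) → ℝ := Fin.cons x0 g with hc
  have hcsign : ∀ k : Fin (n + 2), 0 < (-1 : ℝ) ^ (n + 1 - k.val) * V.eval (c k) := by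
    intro k
    induction k using Fin.cases with
    | zero => simpa [hc] using hx0sign
    | succ j =>
      have hv : n + 1 - (j.succ).val = n - j.val := by
        simp only [Fin.val_succ]; omega
      rw [hc, hv]; simpa [Fin.cons_succ] using hgsign j
  have hclt : ∀ k : Fin (n + 1), c k.castSucc < c k.succ := by
    intro k
    induction k using Fin.cases with
    | zero =>
      rw [hc]
      simpa [Fin.castSucc_zero, Fin.cons_zero, Fin.cons_succ] using hx0g 0
    | succ i =>
      rw [hc, ← Fin.succ_castSucc, Fin.cons_succ, Fin.cons_succ, hg, Fin.snoc_castSucc]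
      rcases Fin.eq_castSucc_or_eq_last i.succ with ⟨i', hi'⟩ | hl
      · rw [hi', Fin.snoc_castSucc]
        apply rmono
        have hv : i.val + 1 = i'.val := by
          have := congrArg Fin.val hi'
          simpa using this
        exact Fin.lt_def.2 (by omega)
      · rw [hl, Fin.snoc_last]; exact rneg i
  have hroots : ∀ k : Fin (n + 1), ∃ x, c k.castSucc < x ∧ x < c k.succ ∧ V.eval x = 0 := by
    intro k
    have h1 := hcsign k.castSucc
    have h2 := hcsign k.succ
    apply exists_root_of_sign V (n - k.val) (hclt k)
    · have hv : n + 1 - k.castSucc.val = n - k.val + 1 := by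
        have := k.isLt
        simp only [Fin.coe_castSucc]; omega
      rwa [hv] at h1
    · have hv : n + 1 - k.succ.val = n - k.val := by
        simp only [Fin.val_succ]; omega
      rwa [hv] at h2
  choose s hs1 hs2 hs3 using hroots
  have smono : StrictMono s := by
    apply Fin.strictMono_iff_lt_succ.2
    intro k
    refine lt_trans (hs2 k.castSucc) ?_
    rw [Fin.succ_castSucc]
    exact hs1 k.succ
  have sneg : ∀ k, s k < 0 := by
    intro k
    refine lt_of_lt_of_le (hs2 k) ?_
    rw [hc, Fin.cons_succ]
    exact hgle k
  have hVP : V = P s := eq_P_of_roots V hVm hVdeg s smono.injective hs3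
  refine ⟨⟨s, smono, sneg, by rw [hT2, hVP]⟩, fun i => ⟨?_, ?_⟩⟩
  · have h := hs2 i.castSucc
    rwa [hc, Fin.cons_succ, hg, Fin.snoc_castSucc] at h
  · have h := hs1 i.succ
    rwa [hc, ← Fin.succ_castSucc, Fin.cons_succ, hg, Fin.snoc_castSucc] at h

noncomputable def D : (n : ℕ) → RootData n
  | 0 => ⟨Fin.elim0, fun a => a.elim0, fun a => a.elim0, by
      show X * T 0 + 2 * X * derivative (T 0) = X * P Fin.elim0
      simp [T, P]⟩
  | n + 1 => (step (D n)).choose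

lemma link (n : ℕ) :
    ∀ i : Fin n, (D (n + 1)).r i.castSucc < (D n).r i ∧ (D n).r i < (D (n + 1)).r i.succ :=
  (step (D n)).choose_spec

lemma natDegree_T {n : ℕ} (d : RootData n) : (T (n + 1)).natDegree = n + 1 := by
  rw [d.eq, natDegree_mul X_ne_zero (monic_P _).ne_zero, natDegree_X, natDegree_P, add_comm]

lemma roots_T {n : ℕ} (d : RootData n) :
    (T (n + 1)).roots = 0 ::ₘ Multiset.map d.r univ.val := by
  rw [d.eq, roots_mul (mul_ne_zero X_ne_zero (monic_P _).ne_zero), roots_X, roots_P,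
    Multiset.singleton_add]

lemma coe_ofFn {n : ℕ} (r : Fin n → ℝ) :
    ((List.ofFn r : List ℝ) : Multiset ℝ) = Multiset.map r univ.val := by
  rw [List.ofFn_eq_map, Fin.univ_def]
  rfl

lemma sortedRoots_T {n : ℕ} (d : RootData n) :
    sortedRoots (T (n + 1)) = List.ofFn d.r ++ [0] := by
  have hcoe : ((List.ofFn d.r ++ [0] : List ℝ) : Multiset ℝ) = (T (n + 1)).roots := by
    rw [roots_T d]
    calc ((List.ofFn d.r ++ [0] : List ℝ) : Multiset ℝ)
        = ((List.ofFn d.r : List ℝ) : Multiset ℝ) + (([0] : List ℝ) : Multiset ℝ) :=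
          (Multiset.coe_add _ _).symm
      _ = ({0} : Multiset ℝ) + ((List.ofFn d.r : List ℝ) : Multiset ℝ) := by
          rw [add_comm, Multiset.coe_singleton]
      _ = 0 ::ₘ Multiset.map d.r univ.val := by rw [Multiset.singleton_add, coe_ofFn]
  apply List.Perm.eq_of_pairwise' (Multiset.pairwise_sort _ _) ?_
    (Multiset.coe_eq_coe.1 (by rw [Multiset.sort_eq, ← hcoe] : _))
  rw [List.pairwise_append]
  refine ⟨List.pairwise_ofFn.2 fun i j h => (d.mono h).le, List.pairwise_singleton _ _, ?_⟩
  intro a ha b hb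
  rw [List.mem_singleton] at hb
  obtain ⟨i, rfl⟩ := List.mem_ofFn.1 ha
  rw [hb]; exact (d.neg i).le

end TAux

namespace TAux

lemma getD_ofFn_append {n : ℕ} (r : Fin n → ℝ) (i : ℕ) :
    (List.ofFn r ++ [(0:ℝ)]).getD i 0 = if h : i < n then r ⟨i, h⟩ else 0 := by
  split_ifs with h
  · rw [List.getD_append _ _ _ _ (by simpa using h),
      List.getD_eq_getElem _ _ (by simpa using h)]
    simp
  · push_neg at h
    rw [List.getD_append_right _ _ _ _ (by simpa using h)]
    cases (i - (List.ofFn r).length) with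
    | zero => rfl
    | succ k => simp [List.getD]

end TAux

open TAux in
/-- Each `T_n` has only real roots (all `natDegree` of its roots are real, counted
with multiplicity), and the roots of `T_{n-1}` interlace the roots of `T_n` for n ≥ 2. -/
theorem T_real_rooted_and_interlacing :
    (∀ n, (T n).roots.card = (T n).natDegree) ∧
    (∀ n, 2 ≤ n → Interlaces (T (n - 1)) (T n)) := by
  constructor
  · intro n
    cases n with
    | zero => simp [T]
    | succ m =>
      rw [roots_T (D m), natDegree_T (D m)]
      simp
  · intro n hn
    obtain ⟨m, rfl⟩ : ∃ m, n = m + 2 := ⟨n - 2, by omega⟩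
    show Interlaces (T (m + 1)) (T (m + 2))
    constructor
    · rw [natDegree_T (D m), natDegree_T (D (m + 1))]
    · intro i hi
      rw [sortedRoots_T (D (m + 1)), sortedRoots_T (D m)] at *
      simp only [List.length_append, List.length_ofFn, List.length_singleton] at hi
      -- hi : i + 1 < m + 2
      rw [getD_ofFn_append, getD_ofFn_append, getD_ofFn_append]
      rcases Nat.lt_or_ge i m with h | h
      · have h1 : i < m + 1 := by omega
        have h2 : i + 1 < m + 1 := by omega
        rw [dif_pos h, dif_pos h1, dif_pos h2]
        have hL := (link m ⟨i, h⟩).1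
        have hR := (link m ⟨i, h⟩).2
        constructor
        · exact le_of_lt (by convert hL using 2 <;> rfl)
        · exact le_of_lt (by convert hR using 2 <;> rfl)
      · have h0 : i = m := by omega
        subst h0
        have h1 : i < i + 1 := Nat.lt_succ_self i
        rw [dif_neg (lt_irrefl i), dif_pos h1, dif_neg (lt_irrefl (i+1))]
        exact ⟨((D (i + 1)).neg ⟨i, h1⟩).le, le_refl 0⟩
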